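/- Let P be a polynomial over a field of characteristic 0, let u be an indeterminate, v = (1+u)^{m+1} u^{-m}, and let u_0 = u, u_1, ..., u_m be the roots of (1+U)^{m+1} = U^m v in an algebraic closure of the field of rational functions in u. Denote by P^>(u) the positive part in u of the Laurent polynomial P(v) (the sum of its monomials of positive degree in u). Then P(v) = P(0) + ∑_{i=0}^m (P^>(u_i) - P^>(-1)). -/

import Mathlib

open Polynomial

/-- The Laurent polynomial `v = (1+u)^{m+1} u^{-m}` in the variable `u = T 1`. -/
noncomputable def vLaurent (K : Type*) [Field K] (m : ℕ) : LaurentPolynomial K :=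
  (1 + LaurentPolynomial.T 1) ^ (m + 1) * LaurentPolynomial.T (-(m : ℤ))

/-- The positive part `P^>` (in the variable `u`) of the Laurent polynomial
`P(v)`, where `v = (1+u)^{m+1} u^{-m}`: the sum of its monomials of positive
degree in `u`, viewed as an ordinary polynomial in `u`. -/
noncomputable def posPart (K : Type*) [Field K] (m : ℕ) (P : Polynomial K) :
    Polynomial K :=
  ∑ n ∈ (Polynomial.aeval (vLaurent K m) P).coeff.support.filter (fun n => 0 < n),
    Polynomial.C ((Polynomial.aeval (vLaurent K m) P).coeff n) * Polynomial.X ^ n.toNat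

namespace Stmt14

open Finset

variable {K : Type*} [Field K] {B : Type*} [CommRing B] [Algebra K B]

/-- evaluation of a Laurent polynomial at a unit -/
noncomputable def eps (K : Type*) [Field K] (B : Type*) [CommRing B] [Algebra K B] (x : Bˣ) :
    LaurentPolynomial K →ₐ[K] B :=
  AddMonoidAlgebra.lift K B ℤ ((Units.coeHom B).comp (zpowersHom Bˣ x))

theorem eps_T (x : Bˣ) (n : ℤ) : eps K B x (LaurentPolynomial.T n) = ((x ^ n : Bˣ) : B) := by
  rw [LaurentPolynomial.T, eps, AddMonoidAlgebra.lift_single]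
  simp [zpowersHom_apply]

theorem eps_apply (x : Bˣ) (f : LaurentPolynomial K) :
    eps K B x f = ∑ n ∈ f.coeff.support, algebraMap K B (f.coeff n) * ((x ^ n : Bˣ) : B) := by
  rw [eps, AddMonoidAlgebra.lift_apply']
  rfl

theorem sum_aeval_mem {n : ℕ} (x : Fin n → B) (S : Subalgebra K B)
    (hS : ∀ k : ℕ, 1 ≤ k → k ≤ n →
      MvPolynomial.aeval x (MvPolynomial.esymm (Fin n) K k) ∈ S)
    (h : Polynomial K) : (∑ i, Polynomial.aeval (x i) h) ∈ S := by
  classical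
  set H : MvPolynomial (Fin n) K := ∑ i, Polynomial.aeval (MvPolynomial.X i) h with hH
  have hsymm : H.IsSymmetric := by
    intro e
    rw [hH, map_sum]
    calc ∑ i, MvPolynomial.rename e (Polynomial.aeval (MvPolynomial.X i) h)
        = ∑ i, Polynomial.aeval (MvPolynomial.X (e i)) h := by
          refine Finset.sum_congr rfl fun i _ => ?_
          rw [← Polynomial.aeval_algHom_apply, MvPolynomial.rename_X]
      _ = H := by rw [hH]; exact Equiv.sum_comp e (fun j => Polynomial.aeval (MvPolynomial.X j) h)
  obtain ⟨Q, hQ⟩ := MvPolynomial.esymmAlgHom_surjective (σ := Fin n) (R := K) (n := n)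
    (Fintype.card_fin n).le ⟨H, hsymm⟩
  have hQ' : H = MvPolynomial.aeval
      (fun i : Fin n => MvPolynomial.esymm (Fin n) K (i + 1)) Q := by
    have := congrArg Subtype.val hQ
    rw [MvPolynomial.esymmAlgHom_apply] at this
    exact this.symm
  have hx : ∑ i, Polynomial.aeval (x i) h = MvPolynomial.aeval x H := by
    rw [hH, map_sum]
    refine Finset.sum_congr rfl fun i _ => ?_
    rw [← Polynomial.aeval_algHom_apply, MvPolynomial.aeval_X]
  rw [hx, hQ', MvPolynomial.comp_aeval_apply]
  set y : Fin n → S := fun i =>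
    ⟨MvPolynomial.aeval x (MvPolynomial.esymm (Fin n) K (i + 1)),
      hS (i + 1) le_add_self (by omega)⟩ with hy
  have hyy : (fun i : Fin n => MvPolynomial.aeval x (MvPolynomial.esymm (Fin n) K (i + 1)))
      = fun i => ((y i : B)) := rfl
  rw [hyy, Subalgebra.mvPolynomial_aeval_coe]
  exact (MvPolynomial.aeval y Q).2

theorem esymm_eq_coeff {n : ℕ} (x : Fin n → B) (k : ℕ) (hk : k ≤ n) :
    (Multiset.map x Finset.univ.val).esymm k
      = (-1) ^ k * (∏ i, (X - C (x i)) : B[X]).coeff (n - k) := by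
  have hcard : Multiset.card (Multiset.map x Finset.univ.val) = n := by simp
  have h := Multiset.prod_X_sub_C_coeff (Multiset.map x Finset.univ.val)
    (k := n - k) (by rw [hcard]; omega)
  rw [hcard, Nat.sub_sub_self hk] at h
  have hprod : ((Multiset.map x Finset.univ.val).map fun t => X - C t)
      = Multiset.map (fun i => X - C (x i)) Finset.univ.val := by
    rw [Multiset.map_map]; rfl
  rw [hprod, ← Finset.prod_eq_multiset_prod] at h
  rw [h, ← mul_assoc, ← mul_pow, neg_mul_neg, one_mul, one_pow, one_mul]

end Stmt14

set_option maxHeartbeats 2000000 in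
theorem stmt_14 (K : Type*) [Field K] [CharZero K] (m : ℕ) (hm : 1 ≤ m)
    (u : AlgebraicClosure (RatFunc K))
    (hu : u = algebraMap (RatFunc K) (AlgebraicClosure (RatFunc K)) RatFunc.X)
    (v : AlgebraicClosure (RatFunc K)) (hv : v = (1 + u) ^ (m + 1) / u ^ m)
    (r : Fin (m + 1) → AlgebraicClosure (RatFunc K)) (hr0 : r 0 = u)
    (hr : ((1 + X) ^ (m + 1) - C v * X ^ m : Polynomial (AlgebraicClosure (RatFunc K)))
        = ∏ i, (X - C (r i)))
    (P : Polynomial K)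
    (φ : K →+* AlgebraicClosure (RatFunc K))
    (hφ : φ = (algebraMap (RatFunc K) (AlgebraicClosure (RatFunc K))).comp
        (algebraMap K (RatFunc K))) :
    Polynomial.eval v (P.map φ)
      = Polynomial.eval 0 (P.map φ) +
        ∑ i, (Polynomial.eval (r i) ((posPart K m P).map φ)
              - Polynomial.eval (-1) ((posPart K m P).map φ)) := by
  classical
  have hφA : φ = algebraMap K (AlgebraicClosure (RatFunc K)) := hφ.trans (IsScalarTower.algebraMap_eq K (RatFunc K) (AlgebraicClosure (RatFunc K))).symm
  have hev : ∀ (p : Polynomial K) (y : (AlgebraicClosure (RatFunc K))), Polynomial.eval y (p.map φ) = Polynomial.aeval y p := by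
    intro p y
    rw [hφA, Polynomial.eval_map, Polynomial.aeval_def]
  -- basic facts about the roots
  have hFeval : ∀ y : AlgebraicClosure (RatFunc K), (1 + y) ^ (m + 1) - v * y ^ m = ∏ i, (y - r i) := by
    intro y
    have h := congrArg (Polynomial.eval y) hr
    simpa [Polynomial.eval_prod] using h
  have hrne : ∀ i, r i ≠ 0 := by
    intro i h0
    have h := hFeval 0
    rw [add_zero, zero_pow (by omega : m ≠ 0), mul_zero, sub_zero, one_pow,
      Finset.prod_eq_zero (Finset.mem_univ i) (by rw [h0, sub_zero] : (0:AlgebraicClosure (RatFunc K)) - r i = 0)] at h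
    exact one_ne_zero h
  have hu0 : u ≠ 0 := hr0 ▸ hrne 0
  have hroots : ∀ i, (1 + r i) ^ (m + 1) = v * (r i) ^ m := by
    intro i
    have h := hFeval (r i)
    rw [Finset.prod_eq_zero (Finset.mem_univ i) (sub_self (r i))] at h
    exact sub_eq_zero.mp h
  -- L, its decomposition at the unit u
  set L := Polynomial.aeval (vLaurent K m) P with hL
  set hp := posPart K m P with hhp
  set negP : Polynomial K := ∑ n ∈ L.coeff.support.filter (fun n => n < 0),
      Polynomial.C (L.coeff n) * Polynomial.X ^ (-n).toNat with hnegP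
  set xu : (AlgebraicClosure (RatFunc K))ˣ := Units.mk0 u hu0 with hxu
  have hxuv : ∀ nn : ℤ, ((xu ^ nn : (AlgebraicClosure (RatFunc K))ˣ) : (AlgebraicClosure (RatFunc K))) = u ^ nn := by
    intro nn
    rw [Units.val_zpow_eq_zpow_val, Units.val_mk0]
  have hepsvL : Stmt14.eps K (AlgebraicClosure (RatFunc K)) xu (vLaurent K m) = v := by
    rw [vLaurent, map_mul, map_pow, map_add, map_one, Stmt14.eps_T, Stmt14.eps_T, hxuv, hxuv,
      zpow_one, zpow_neg, zpow_natCast, hv, div_eq_mul_inv]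
  have hPv : Stmt14.eps K (AlgebraicClosure (RatFunc K)) xu L = Polynomial.aeval v P := by
    rw [hL, ← Polynomial.aeval_algHom_apply, hepsvL]
  have hdec : Stmt14.eps K (AlgebraicClosure (RatFunc K)) xu L
      = Polynomial.aeval (u⁻¹ : (AlgebraicClosure (RatFunc K))) negP
        + algebraMap K (AlgebraicClosure (RatFunc K)) (L.coeff 0) + Polynomial.aeval u hp := by
    rw [Stmt14.eps_apply]
    have hpart : ∀ (s : Finset ℤ) (f : ℤ → AlgebraicClosure (RatFunc K)),
        ∑ n ∈ s, f n
          = ∑ n ∈ s.filter (fun n => n < 0), f n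
            + ∑ n ∈ s.filter (fun n => n = 0), f n
            + ∑ n ∈ s.filter (fun n => 0 < n), f n := by
      intro s f
      have key := Finset.sum_filter_add_sum_filter_not s (fun n => n < 0) f
      have key2 := Finset.sum_filter_add_sum_filter_not
        (s.filter (fun n => ¬ n < 0)) (fun n => n = 0) f
      have e2 : (s.filter (fun n => ¬ n < 0)).filter (fun n => n = 0)
          = s.filter (fun n => n = 0) := by
        rw [Finset.filter_filter]; exact Finset.filter_congr (fun n _ => by constructor <;> omega)
      have e3 : (s.filter (fun n => ¬ n < 0)).filter (fun n => ¬ n = 0)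
          = s.filter (fun n => 0 < n) := by
        rw [Finset.filter_filter]; exact Finset.filter_congr (fun n _ => by constructor <;> omega)
      rw [e2, e3] at key2
      rw [← key, ← key2]
      ring
    rw [hpart]
    have hneg : ∑ n ∈ L.coeff.support.filter (fun n => n < 0),
        algebraMap K (AlgebraicClosure (RatFunc K)) (L.coeff n) * ((xu ^ n : (AlgebraicClosure (RatFunc K))ˣ) : (AlgebraicClosure (RatFunc K)))
          = Polynomial.aeval (u⁻¹ : (AlgebraicClosure (RatFunc K))) negP := by
      rw [hnegP, map_sum]
      refine Finset.sum_congr rfl fun n hn => ?_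
      have hn0 : n < 0 := by simpa using (Finset.mem_filter.mp hn).2
      rw [map_mul, map_pow, Polynomial.aeval_C, Polynomial.aeval_X, hxuv]
      congr 1
      rw [← zpow_natCast (u⁻¹ : (AlgebraicClosure (RatFunc K))), Int.toNat_of_nonneg (by omega : (0:ℤ) ≤ -n),
        inv_zpow, zpow_neg, inv_inv]
    have hzero0 : ∑ n ∈ L.coeff.support.filter (fun n => n = 0),
        algebraMap K (AlgebraicClosure (RatFunc K)) (L.coeff n) * ((xu ^ n : (AlgebraicClosure (RatFunc K))ˣ) : (AlgebraicClosure (RatFunc K)))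
          = algebraMap K (AlgebraicClosure (RatFunc K)) (L.coeff 0) := by
      rw [Finset.filter_eq' L.coeff.support (0:ℤ)]
      by_cases h0 : (0:ℤ) ∈ L.coeff.support
      · rw [if_pos h0, Finset.sum_singleton, zpow_zero, Units.val_one, mul_one]
      · rw [if_neg h0, Finset.sum_empty, Finsupp.notMem_support_iff.mp h0, map_zero]
    have hpos : ∑ n ∈ L.coeff.support.filter (fun n => 0 < n),
        algebraMap K (AlgebraicClosure (RatFunc K)) (L.coeff n) * ((xu ^ n : (AlgebraicClosure (RatFunc K))ˣ) : (AlgebraicClosure (RatFunc K)))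
          = Polynomial.aeval u hp := by
      rw [hhp]
      simp only [_root_.posPart]
      rw [← hL, map_sum]
      refine Finset.sum_congr rfl fun n hn => ?_
      have hn0 : 0 < n := by simpa using (Finset.mem_filter.mp hn).2
      rw [map_mul, map_pow, Polynomial.aeval_C, Polynomial.aeval_X, hxuv]
      congr 1
      rw [← zpow_natCast u, Int.toNat_of_nonneg (by omega : (0:ℤ) ≤ n)]
    rw [hneg, hzero0, hpos]
  -- the paired subalgebra: values (aeval v q, aeval 0 q)
  set θ : Polynomial K →ₐ[K] (AlgebraicClosure (RatFunc K)) × (AlgebraicClosure (RatFunc K)) :=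
    (Polynomial.aeval v).prod (Polynomial.aeval (0 : AlgebraicClosure (RatFunc K))) with hθ
  have hpair : ∀ (p : MvPolynomial (Fin (m+1)) K),
      MvPolynomial.aeval (fun i => ((r i, -1) : (AlgebraicClosure (RatFunc K)) × (AlgebraicClosure (RatFunc K)))) p
        = (MvPolynomial.aeval r p,
           MvPolynomial.aeval (fun _ : Fin (m+1) => (-1 : AlgebraicClosure (RatFunc K))) p) := by
    intro p
    have h1 := MvPolynomial.comp_aeval_apply
      (AlgHom.fst K (AlgebraicClosure (RatFunc K)) (AlgebraicClosure (RatFunc K)))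
      (f := fun i => ((r i, -1) : (AlgebraicClosure (RatFunc K)) × (AlgebraicClosure (RatFunc K)))) p
    have h2 := MvPolynomial.comp_aeval_apply
      (AlgHom.snd K (AlgebraicClosure (RatFunc K)) (AlgebraicClosure (RatFunc K)))
      (f := fun i => ((r i, -1) : (AlgebraicClosure (RatFunc K)) × (AlgebraicClosure (RatFunc K)))) p
    exact Prod.ext (by simpa using h1) (by simpa using h2)
  have hesymmr : ∀ k : ℕ, 1 ≤ k → k ≤ m + 1 →
      MvPolynomial.aeval r (MvPolynomial.esymm (Fin (m+1)) K k)
        = algebraMap K (AlgebraicClosure (RatFunc K)) ((-1)^k * ((m+1).choose (m+1-k) : K))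
          + (if k = 1 then v else 0) := by
    intro k hk1 hk2
    rw [MvPolynomial.aeval_esymm_eq_multiset_esymm, Stmt14.esymm_eq_coeff r k hk2, ← hr,
      Polynomial.coeff_sub, Polynomial.coeff_one_add_X_pow, Polynomial.coeff_C_mul,
      Polynomial.coeff_X_pow]
    rw [map_mul, map_pow, map_neg, map_one, map_natCast]
    by_cases hk : k = 1
    · rw [if_pos hk, if_pos (by omega : m + 1 - k = m), hk]
      ring
    · rw [if_neg hk, if_neg (by omega : ¬ m + 1 - k = m)]
      ring
  have hesymm1 : ∀ k : ℕ, 1 ≤ k → k ≤ m + 1 →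
      MvPolynomial.aeval (fun _ : Fin (m+1) => (-1 : AlgebraicClosure (RatFunc K)))
          (MvPolynomial.esymm (Fin (m+1)) K k)
        = algebraMap K (AlgebraicClosure (RatFunc K)) ((-1)^k * ((m+1).choose (m+1-k) : K)) := by
    intro k hk1 hk2
    rw [MvPolynomial.aeval_esymm_eq_multiset_esymm,
      Stmt14.esymm_eq_coeff (fun _ : Fin (m+1) => (-1 : AlgebraicClosure (RatFunc K))) k hk2]
    simp only [Finset.prod_const, Finset.card_univ, Fintype.card_fin, map_neg, map_one,
      sub_neg_eq_add]
    rw [Polynomial.coeff_X_add_one_pow, map_mul, map_pow, map_neg, map_one, map_natCast]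
  have hSq : (∑ i, Polynomial.aeval ((r i, -1) : (AlgebraicClosure (RatFunc K)) × (AlgebraicClosure (RatFunc K))) hp) ∈ θ.range := by
    apply Stmt14.sum_aeval_mem
    intro k hk1 hk2
    refine ⟨Polynomial.C ((-1)^k * ((m+1).choose (m+1-k) : K))
      + (if k = 1 then Polynomial.X else 0), ?_⟩
    show θ (Polynomial.C ((-1)^k * ((m+1).choose (m+1-k) : K))
      + (if k = 1 then Polynomial.X else 0)) = _
    rw [hθ, AlgHom.prod_apply, hpair, hesymmr k hk1 hk2, hesymm1 k hk1 hk2]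
    refine Prod.ext ?_ ?_ <;>
      simp [apply_ite (Polynomial.aeval v),
        apply_ite (Polynomial.aeval (0 : AlgebraicClosure (RatFunc K)))]
  obtain ⟨q, hq0⟩ := hSq
  have hq : θ q = ∑ i, Polynomial.aeval
      ((r i, -1) : (AlgebraicClosure (RatFunc K)) × (AlgebraicClosure (RatFunc K))) hp := hq0
  have hterm : ∀ i : Fin (m+1),
      Polynomial.aeval ((r i, -1) : (AlgebraicClosure (RatFunc K)) × (AlgebraicClosure (RatFunc K))) hp
        = (Polynomial.aeval (r i) hp, Polynomial.aeval (-1 : AlgebraicClosure (RatFunc K)) hp) := by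
    intro i
    refine Prod.ext ?_ ?_
    · exact (Polynomial.aeval_algHom_apply
        (AlgHom.fst K (AlgebraicClosure (RatFunc K)) (AlgebraicClosure (RatFunc K)))
        ((r i, -1)) hp).symm
    · exact (Polynomial.aeval_algHom_apply
        (AlgHom.snd K (AlgebraicClosure (RatFunc K)) (AlgebraicClosure (RatFunc K)))
        ((r i, -1)) hp).symm
  rw [hθ, AlgHom.prod_apply] at hq
  simp only [hterm] at hq
  have hq1 : Polynomial.aeval v q = ∑ i, Polynomial.aeval (r i) hp := by
    have := congrArg Prod.fst hq
    simpa [Prod.fst_sum] using this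
  have hq2 : Polynomial.aeval (0 : AlgebraicClosure (RatFunc K)) q
      = (m+1) • Polynomial.aeval (-1 : AlgebraicClosure (RatFunc K)) hp := by
    have := congrArg Prod.snd hq
    simpa [Prod.snd_sum, Finset.sum_const, Finset.card_univ, Fintype.card_fin] using this
  -- the polynomial G and its coefficients
  obtain ⟨F2, hF2⟩ : ∃ F2' : Polynomial (AlgebraicClosure (RatFunc K)),
      F2' = (1 + Polynomial.X) ^ (m + 1) - Polynomial.C v * Polynomial.X ^ m := ⟨_, rfl⟩
  obtain ⟨G, hG⟩ : ∃ G' : Polynomial (AlgebraicClosure (RatFunc K)),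
      G' = ∏ i : Fin m, (Polynomial.X - Polynomial.C (r i.succ)) := ⟨_, rfl⟩
  have hFG : F2 = (Polynomial.X - Polynomial.C u) * G := by
    rw [hF2, hG, hr, Fin.prod_univ_succ, hr0]
  have hGmonic : G.Monic := by
    rw [hG]
    exact Polynomial.monic_prod_of_monic _ _ (fun i _ => Polynomial.monic_X_sub_C _)
  have hGdeg : G.natDegree = m := by
    rw [hG, Polynomial.natDegree_prod _ _ (fun i _ => Polynomial.X_sub_C_ne_zero _)]
    simp [Polynomial.natDegree_X_sub_C]
  have hFmonic : F2.Monic := by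
    rw [hFG]; exact (Polynomial.monic_X_sub_C u).mul hGmonic
  have hFdeg : F2.natDegree = m + 1 := by
    rw [hFG, Polynomial.natDegree_mul (Polynomial.X_sub_C_ne_zero u) hGmonic.ne_zero,
      Polynomial.natDegree_X_sub_C, hGdeg, add_comm]
  have hFcoeff : ∀ j, F2.coeff j
      = (((m+1).choose j : AlgebraicClosure (RatFunc K))) - if j = m then v else 0 := by
    intro j
    rw [hF2, Polynomial.coeff_sub, Polynomial.coeff_one_add_X_pow, Polynomial.coeff_C_mul,
      Polynomial.coeff_X_pow, mul_ite, mul_one, mul_zero]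
  have hFu : Polynomial.eval u F2 = 0 := by
    rw [hFG]; simp
  have hrec : ∀ t : ℕ, F2.coeff (t+1) = G.coeff t - u * G.coeff (t+1) := by
    intro t
    rw [hFG, sub_mul, Polynomial.coeff_sub, Polynomial.coeff_X_mul, Polynomial.coeff_C_mul]
  have hkey : ∀ d s : ℕ, s + d = m → u^(s+1) * G.coeff s
      = -∑ k ∈ Finset.range (s+1), F2.coeff k * u^k := by
    intro d
    induction d with
    | zero =>
      intro s hs
      have hs' : s = m := by omega
      rw [hs']
      have hcm : G.coeff m = 1 := by
        have h := hGmonic.coeff_natDegree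
        rwa [hGdeg] at h
      rw [hcm, mul_one]
      have hevalF : Polynomial.eval u F2 = ∑ k ∈ Finset.range (m+2), F2.coeff k * u^k :=
        Polynomial.eval_eq_sum_range' (by omega) u
      rw [hFu, Finset.sum_range_succ] at hevalF
      have hcF : F2.coeff (m+1) = 1 := by
        have h := hFmonic.coeff_natDegree
        rwa [hFdeg] at h
      rw [hcF, one_mul] at hevalF
      linear_combination -hevalF
    | succ d ih =>
      intro s hs
      have ih' := ih (s+1) (by omega)
      have h := hrec s
      have hsum : ∑ k ∈ Finset.range (s+1+1), F2.coeff k * u^k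
          = ∑ k ∈ Finset.range (s+1), F2.coeff k * u^k + F2.coeff (s+1) * u^(s+1) :=
        Finset.sum_range_succ _ _
      linear_combination ih' - hsum - u^(s+1) * h
  have hGmem : ∀ s : ℕ, s < m → ∃ w : Polynomial K,
      Polynomial.aeval (u⁻¹ : AlgebraicClosure (RatFunc K)) w = G.coeff s := by
    intro s hsm
    refine ⟨-∑ k ∈ Finset.range (s+1), Polynomial.C (((m+1).choose k : K)) * Polynomial.X^(s+1-k), ?_⟩
    have h1 := hkey (m - s) s (by omega)
    have h2 : u^(s+1) * Polynomial.aeval (u⁻¹ : AlgebraicClosure (RatFunc K))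
        (-∑ k ∈ Finset.range (s+1), Polynomial.C (((m+1).choose k : K)) * Polynomial.X^(s+1-k))
        = -∑ k ∈ Finset.range (s+1), F2.coeff k * u^k := by
      rw [map_neg, map_sum, mul_neg, Finset.mul_sum]
      congr 1
      refine Finset.sum_congr rfl fun k hk => ?_
      have hks : k < s + 1 := Finset.mem_range.mp hk
      rw [map_mul, map_pow, Polynomial.aeval_C, Polynomial.aeval_X, map_natCast,
        hFcoeff k, if_neg (by omega : ¬ k = m), sub_zero]
      have hps : u ^ (s+1) = u ^ k * u ^ (s+1-k) := by
        rw [← pow_add]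
        congr 1
        omega
      rw [hps, inv_pow]
      field_simp
    exact mul_left_cancel₀ (pow_ne_zero _ hu0) (h2.trans h1.symm)
  -- symmetric functions of r 1 .. r m lie in K[u⁻¹]
  set V : Subalgebra K (AlgebraicClosure (RatFunc K)) :=
    (Polynomial.aeval (u⁻¹ : AlgebraicClosure (RatFunc K)) : Polynomial K →ₐ[K] AlgebraicClosure (RatFunc K)).range with hV
  have hSV : (∑ i : Fin m, Polynomial.aeval (r (Fin.succ i)) hp) ∈ V := by
    apply Stmt14.sum_aeval_mem (x := fun i : Fin m => r (Fin.succ i))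
    intro k hk1 hk2
    rw [MvPolynomial.aeval_esymm_eq_multiset_esymm,
      Stmt14.esymm_eq_coeff (fun i : Fin m => r (Fin.succ i)) k hk2]
    have hprodG : (∏ i : Fin m, (Polynomial.X - Polynomial.C ((fun i : Fin m => r (Fin.succ i)) i))) = G := by
      rw [hG]
    rw [hprodG]
    obtain ⟨w, hw⟩ := hGmem (m - k) (by omega)
    have hneg1 : ((-1 : AlgebraicClosure (RatFunc K)))^k
        = algebraMap K (AlgebraicClosure (RatFunc K)) ((-1)^k) := by
      rw [map_pow, map_neg, map_one]
    rw [hneg1]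
    exact V.mul_mem (V.algebraMap_mem _) ⟨w, hw⟩
  -- transcendence of u over K
  have htr : Transcendental K u := by
    rw [hu]
    rw [transcendental_algebraMap_iff
      (algebraMap (RatFunc K) (AlgebraicClosure (RatFunc K))).injective]
    rw [← RatFunc.algebraMap_X (K := K)]
    rw [transcendental_algebraMap_iff (IsFractionRing.injective (Polynomial K) (RatFunc K))]
    exact Polynomial.transcendental_X K
  have hinj : ∀ p : Polynomial K, Polynomial.aeval u p = 0 → p = 0 := by
    intro p hp0
    have h := transcendental_iff_injective.mp htr
    apply h
    rw [hp0, map_zero]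
  -- the key vanishing lemma
  have hzero : ∀ g' : Polynomial K, g'.coeff 0 = 0 →
      (∃ w : Polynomial K, Polynomial.aeval (u⁻¹ : AlgebraicClosure (RatFunc K)) w
        = Polynomial.aeval v g') → g' = 0 := by
    intro g' h0 hex
    obtain ⟨w, hw⟩ := hex
    by_contra hne
    have hN1 : 1 ≤ g'.natDegree := by
      rcases Nat.eq_zero_or_pos g'.natDegree with h | h
      · exact absurd (by rw [Polynomial.eq_C_of_natDegree_eq_zero h, h0, map_zero]) hne
      · exact h
    set N := g'.natDegree with hN
    set M := N * m + w.natDegree with hM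
    have hNmM : N * m ≤ M := Nat.le_add_right _ _
    set Pl : Polynomial K := ∑ k ∈ Finset.range (N+1),
      Polynomial.C (g'.coeff k) * (1 + Polynomial.X)^(k*(m+1)) * Polynomial.X^(M - k*m) with hPl
    set Pr : Polynomial K := ∑ j ∈ Finset.range (w.natDegree+1),
      Polynomial.C (w.coeff j) * Polynomial.X^(M - j) with hPr
    have hLeval : Polynomial.aeval u Pl = u^M * Polynomial.aeval v g' := by
      rw [hPl, map_sum, Polynomial.aeval_eq_sum_range (x := v) (p := g'), ← hN, Finset.mul_sum]
      refine Finset.sum_congr rfl fun k hk => ?_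
      have hkN : k ≤ N := by have := Finset.mem_range.mp hk; omega
      have hkm : k * m ≤ M := le_trans (Nat.mul_le_mul_right m hkN) hNmM
      rw [map_mul, map_mul, map_pow, map_pow, map_add, map_one, Polynomial.aeval_C,
        Polynomial.aeval_X, Algebra.smul_def]
      have hv' : v ^ k * u^(k*m) = (1+u)^(k*(m+1)) := by
        rw [hv, div_pow, ← pow_mul, ← pow_mul, mul_comm (m+1) k, mul_comm m k]
        field_simp
      have hMM : u ^ M = u ^ (M - k*m) * u ^ (k*m) := by
        rw [← pow_add, Nat.sub_add_cancel hkm]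
      rw [hMM]
      linear_combination (-(algebraMap K (AlgebraicClosure (RatFunc K)) (g'.coeff k))
        * u ^ (M - k*m)) * hv'
    have hReval : Polynomial.aeval u Pr = u^M * Polynomial.aeval (u⁻¹ : AlgebraicClosure (RatFunc K)) w := by
      rw [hPr, map_sum, Polynomial.aeval_eq_sum_range (x := (u⁻¹ : AlgebraicClosure (RatFunc K))), Finset.mul_sum]
      refine Finset.sum_congr rfl fun j hj => ?_
      have hjM : j ≤ M := by
        have := Finset.mem_range.mp hj
        have h2 : w.natDegree ≤ M := Nat.le_add_left _ _
        omega
      rw [map_mul, map_pow, Polynomial.aeval_C, Polynomial.aeval_X, Algebra.smul_def, inv_pow]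
      have hMM : u ^ M = u ^ (M - j) * u ^ j := by
        rw [← pow_add, Nat.sub_add_cancel hjM]
      rw [hMM]
      field_simp
    have hPlPr : Pl = Pr := by
      have h1 : Polynomial.aeval u (Pl - Pr) = 0 := by
        rw [map_sub, hLeval, hReval, hw]
        ring
      exact sub_eq_zero.mp (hinj _ h1)
    have hcl : Pl.coeff (M + N) = g'.coeff N := by
      rw [hPl, Polynomial.finset_sum_coeff]
      rw [Finset.sum_eq_single N]
      · rw [Polynomial.coeff_mul_X_pow', if_pos (by omega : M - N*m ≤ M + N)]
        have harith : M + N - (M - N*m) = N*m + N := by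
          have h1 : N * m ≤ M := hNmM
          omega
        rw [harith, Polynomial.coeff_C_mul, Polynomial.coeff_one_add_X_pow,
          show N*(m+1) = N*m + N from by ring, Nat.choose_self, Nat.cast_one, mul_one]
      · intro k hk hkN
        have hkN' : k ≤ N := by have := Finset.mem_range.mp hk; omega
        have hkm : k * m ≤ M := le_trans (Nat.mul_le_mul_right m hkN') hNmM
        rw [Polynomial.coeff_mul_X_pow', if_pos (by omega : M - k*m ≤ M + N)]
        have harith : M + N - (M - k*m) = N + k*m := by omega
        rw [harith, Polynomial.coeff_C_mul, Polynomial.coeff_one_add_X_pow,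
          show k*(m+1) = k*m + k from by ring,
          Nat.choose_eq_zero_of_lt (by omega : k*m + k < N + k*m), Nat.cast_zero, mul_zero]
      · intro h
        exact absurd (Finset.self_mem_range_succ N) h
    have hcr : Pr.coeff (M + N) = 0 := by
      rw [hPr, Polynomial.finset_sum_coeff]
      apply Finset.sum_eq_zero
      intro j hj
      rw [Polynomial.coeff_C_mul, Polynomial.coeff_X_pow,
        if_neg (by omega : ¬ M + N = M - j), mul_zero]
    have hfinal : g'.coeff N = 0 := by rw [← hcl, hPlPr, hcr]
    exact (Polynomial.leadingCoeff_ne_zero.mpr hne) hfinal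
  -- assemble everything
  simp only [hev]
  have hsum : ∑ i, (Polynomial.aeval (r i) hp - Polynomial.aeval (-1 : AlgebraicClosure (RatFunc K)) hp)
      = Polynomial.aeval v q - Polynomial.aeval (0 : AlgebraicClosure (RatFunc K)) q := by
    rw [Finset.sum_sub_distrib, hq1, hq2, Finset.sum_const, Finset.card_univ, Fintype.card_fin]
  rw [hsum]
  set g : Polynomial K := P - q with hg
  set g' : Polynomial K := g - Polynomial.C (g.coeff 0) with hg'
  have hg'0 : g'.coeff 0 = 0 := by
    rw [hg', Polynomial.coeff_sub, Polynomial.coeff_C_zero, sub_self]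
  have hmem : ∃ w : Polynomial K, Polynomial.aeval (u⁻¹ : AlgebraicClosure (RatFunc K)) w
      = Polynomial.aeval v g' := by
    obtain ⟨w2, hw2t⟩ := hSV
    have hw2 : Polynomial.aeval (u⁻¹ : AlgebraicClosure (RatFunc K)) w2
        = ∑ i : Fin m, Polynomial.aeval (r (Fin.succ i)) hp := hw2t
    refine ⟨negP + Polynomial.C (L.coeff 0) - w2 - Polynomial.C (g.coeff 0), ?_⟩
    rw [map_sub, map_sub, map_add, Polynomial.aeval_C, Polynomial.aeval_C, hw2]
    rw [hg', map_sub, Polynomial.aeval_C, hg, map_sub, hq1]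
    have hPv' : Polynomial.aeval v P
        = Polynomial.aeval (u⁻¹ : AlgebraicClosure (RatFunc K)) negP
          + algebraMap K (AlgebraicClosure (RatFunc K)) (L.coeff 0) + Polynomial.aeval u hp :=
      hPv.symm.trans hdec
    rw [hPv', Fin.sum_univ_succ, hr0]
    ring
  have hg'z := hzero g' hg'0 hmem
  have hvg : Polynomial.aeval v g = Polynomial.aeval (0 : AlgebraicClosure (RatFunc K)) g := by
    have h1 : Polynomial.aeval v g' = 0 := by rw [hg'z, map_zero]
    rw [hg', map_sub, Polynomial.aeval_C, sub_eq_zero] at h1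
    rw [h1, Polynomial.aeval_def, Polynomial.eval₂_at_zero]
  rw [hg, map_sub, map_sub] at hvg
  linear_combination hvg
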